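/- Let N ≥ 4 be an integer, α ∈ (0,2) and β > 1/(N−3). Let h(r) = r/(ln r)^β for r ≥ e, and consider the thorn A = {(x₁,…,x_N) ∈ ℝ^N : x₁ ≥ e and x₂² + ⋯ + x_N² ≤ h(x₁)²}. Then for every x ∈ ℝ^N, ∫_A |x−y|^{-(N−α)} dy = +∞. -/

import Mathlib

open MeasureTheory Real Filter Topology

noncomputable section

private lemma coord_abs_le_norm {N : ℕ} (z : EuclideanSpace ℝ (Fin N)) (i : Fin N) :
    |z i| ≤ ‖z‖ := by
  rw [EuclideanSpace.norm_eq, ← Real.sqrt_sq_eq_abs]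
  refine Real.sqrt_le_sqrt ?_
  have h := Finset.single_le_sum (f := fun j => ‖z j‖ ^ 2) (fun j _ => by positivity)
    (Finset.mem_univ i)
  simpa [Real.norm_eq_abs, sq_abs] using h

private def box (N : ℕ) (l u : Fin N → ℝ) : Set (EuclideanSpace ℝ (Fin N)) :=
  {y | ∀ i, y i ∈ Set.Icc (l i) (u i)}

private lemma box_eq (N : ℕ) (l u : Fin N → ℝ) :
    box N l u = (MeasurableEquiv.toLp 2 (Fin N → ℝ)).symm ⁻¹'
      (Set.univ.pi fun i => Set.Icc (l i) (u i)) := by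
  ext y
  simp only [box, Set.mem_setOf_eq, Set.mem_preimage, Set.mem_pi, Set.mem_univ, true_implies]
  exact ⟨fun h i => h i, fun h i => h i⟩

private lemma box_meas (N : ℕ) (l u : Fin N → ℝ) : MeasurableSet (box N l u) := by
  rw [box_eq]
  exact (MeasurableEquiv.toLp 2 (Fin N → ℝ)).symm.measurable
    (MeasurableSet.univ_pi fun i => measurableSet_Icc)

private lemma box_vol (N : ℕ) (l u : Fin N → ℝ) :
    volume (box N l u) = ∏ i, ENNReal.ofReal (u i - l i) := by
  rw [box_eq, (EuclideanSpace.volume_preserving_symm_measurableEquiv_toLp (Fin N)).measure_preimage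
    (MeasurableSet.univ_pi fun i => measurableSet_Icc).nullMeasurableSet, volume_pi_pi]
  simp [Real.volume_Icc]

set_option maxHeartbeats 1000000 in
/-- for the thorn `A = {x : x₁ ≥ e, x₂²+⋯+x_N² ≤ h(x₁)²}` with
`h(r) = r/(ln r)^β`, `β > 1/(N-3)`, the Riesz integral `∫_A |x-y|^{-(N-α)} dy`
is infinite for every `x`. -/
theorem stmt2 (N : ℕ) (hN : 4 ≤ N) (α β : ℝ) (hα1 : 0 < α) (hα2 : α < 2)
    (hβ : 1 / ((N : ℝ) - 3) < β) :
    ∀ x : EuclideanSpace ℝ (Fin N),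
      ∫⁻ y in {y : EuclideanSpace ℝ (Fin N) |
          Real.exp 1 ≤ y ⟨0, by omega⟩ ∧
          ∑ i ∈ Finset.univ.erase (⟨0, by omega⟩ : Fin N), (y i) ^ 2 ≤
            (y ⟨0, by omega⟩ / (Real.log (y ⟨0, by omega⟩)) ^ β) ^ 2},
        ENNReal.ofReal (‖x - y‖ ^ (-((N : ℝ) - α))) = ⊤ := by
  intro x
  have hN0 : 0 < N := by omega
  set e0 : Fin N := ⟨0, by omega⟩ with he0
  have hN4R : (4:ℝ) ≤ (N:ℝ) := by exact_mod_cast hN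
  have hNR0 : (0:ℝ) < (N:ℝ) := by linarith
  have hβ0 : 0 < β := by
    have h3 : (0:ℝ) < (N:ℝ) - 3 := by linarith
    exact lt_trans (by positivity) hβ
  have hlog2 : 0 < Real.log 2 := Real.log_pos one_lt_two
  have hlog2le : Real.log 2 ≤ 1 := by
    have h := Real.log_two_lt_d9; linarith
  set k : ℕ := ⌈β⌉₊ with hk
  set m : ℕ := k * (N - 1) with hm
  set ρ : ℝ := (2:ℝ) ^ α with hρdef
  have hρ : 1 < ρ := by
    rw [hρdef]
    calc (1:ℝ) = (2:ℝ) ^ (0:ℝ) := (Real.rpow_zero 2).symm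
    _ < (2:ℝ) ^ α := Real.rpow_lt_rpow_of_exponent_lt one_lt_two hα1
  have hρ0 : (0:ℝ) < ρ := lt_trans one_pos hρ
  set C : ℝ := 2 * (N:ℝ) + 1 with hCdef
  have hCpos : 0 < C := by rw [hCdef]; linarith
  set L : ℕ → ℝ := fun n => (((n:ℝ) + 1) * Real.log 2) ^ β with hL
  have hLpos : ∀ n : ℕ, 0 < L n := by
    intro n; rw [hL]
    exact Real.rpow_pos_of_pos (mul_pos (by positivity) hlog2) β
  set r : ℕ → ℝ := fun n => 2 ^ n / ((N:ℝ) * L n) with hr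
  have hrpos : ∀ n : ℕ, 0 < r n := by
    intro n; rw [hr]
    exact div_pos (by positivity) (mul_pos hNR0 (hLpos n))
  set l : ℕ → Fin N → ℝ := fun n i => if i = e0 then 2 ^ n else 0 with hl
  set u : ℕ → Fin N → ℝ := fun n i => if i = e0 then 2 ^ (n+1) else r n with hu
  set D : ℝ := C ^ (-((N:ℝ) - α)) / (N:ℝ) ^ (N - 1) with hD
  have hDpos : 0 < D := by
    rw [hD]
    exact div_pos (Real.rpow_pos_of_pos hCpos _) (pow_pos hNR0 _)
  obtain ⟨n₁, hn₁⟩ := exists_nat_gt ‖x‖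
  -- the divergence of the lower bounds
  have T0 : Tendsto (fun n : ℕ => ((n:ℝ) + 1) ^ m / ρ ^ n) atTop (𝓝 0) := by
    have h1 := (tendsto_pow_const_div_const_pow_of_one_lt m hρ).comp
      (tendsto_add_atTop_nat 1)
    have h2 := h1.mul_const ρ
    rw [zero_mul] at h2
    refine h2.congr fun n => ?_
    have hρn : ρ ^ n ≠ 0 := pow_ne_zero n hρ0.ne'
    simp only [Function.comp_apply]
    push_cast
    field_simp [pow_succ]
    ring
  have T2 : Tendsto (fun n : ℕ => ρ ^ n / ((n:ℝ) + 1) ^ m) atTop atTop := by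
    have h1 : Tendsto (fun n : ℕ => ((n:ℝ) + 1) ^ m / ρ ^ n) atTop (𝓝[>] 0) :=
      tendsto_nhdsWithin_of_tendsto_nhds_of_eventually_within _ T0
        (Eventually.of_forall fun n =>
          Set.mem_Ioi.2 (div_pos (by positivity) (pow_pos hρ0 n)))
    refine h1.inv_tendsto_nhdsGT_zero.congr fun n => ?_
    simp [inv_div]
  have T : Tendsto (fun n : ℕ => D * (ρ ^ n / ((n:ℝ) + 1) ^ m)) atTop atTop :=
    Tendsto.const_mul_atTop hDpos T2
  refine ENNReal.eq_top_of_forall_nnreal_le fun M => ?_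
  obtain ⟨n, hM, hn2, hnn1⟩ : ∃ n : ℕ, (M:ℝ) ≤ D * (ρ ^ n / ((n:ℝ) + 1) ^ m) ∧
      2 ≤ n ∧ n₁ ≤ n := by
    have ev := (tendsto_atTop.1 T (M:ℝ)).and (eventually_ge_atTop (max 2 n₁))
    obtain ⟨n, h1, h2⟩ := ev.exists
    exact ⟨n, h1, le_trans (le_max_left _ _) h2, le_trans (le_max_right _ _) h2⟩
  -- basic facts about this n
  have hP : (0:ℝ) < 2 ^ n := by positivity
  have h4le : (4:ℝ) ≤ 2 ^ n := by
    calc (4:ℝ) = 2 ^ 2 := by norm_num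
    _ ≤ 2 ^ n := pow_le_pow_right₀ one_le_two hn2
  have hKn : ‖x‖ < 2 ^ n := by
    have h2 : (n:ℝ) < 2 ^ n := by exact_mod_cast Nat.lt_two_pow_self (n := n)
    have h3 : (n₁:ℝ) ≤ (n:ℝ) := by exact_mod_cast hnn1
    linarith
  have hbase1 : 1 ≤ ((n:ℝ) + 1) * Real.log 2 := by
    have hge : (2:ℝ) ≤ (n:ℝ) + 1 := by
      have h1 : (1:ℝ) ≤ (n:ℝ) := by exact_mod_cast le_trans (by norm_num) hn2
      linarith
    nlinarith [Real.log_two_gt_d9]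
  have hL1 : 1 ≤ L n := by
    rw [hL]
    calc (1:ℝ) = 1 ^ β := (Real.one_rpow β).symm
    _ ≤ (((n:ℝ)+1) * Real.log 2) ^ β := Real.rpow_le_rpow (by norm_num) hbase1 hβ0.le
  have hNL1 : 1 ≤ (N:ℝ) * L n := by nlinarith
  have hrle : r n ≤ 2 ^ n := by
    rw [hr]
    exact div_le_self hP.le hNL1
  -- the box is inside the thorn
  have hsub : box N (l n) (u n) ⊆ {y : EuclideanSpace ℝ (Fin N) |
      Real.exp 1 ≤ y e0 ∧
      ∑ i ∈ Finset.univ.erase e0, (y i) ^ 2 ≤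
        (y e0 / (Real.log (y e0)) ^ β) ^ 2} := by
    intro y hy
    have hy0 : y e0 ∈ Set.Icc ((2:ℝ)^n) ((2:ℝ)^(n+1)) := by
      have h := hy e0
      rw [hl, hu] at h
      simpa using h
    have hyi : ∀ i, i ≠ e0 → y i ∈ Set.Icc 0 (r n) := by
      intro i hi
      have h := hy i
      rw [hl, hu] at h
      simpa [hi] using h
    constructor
    · have hexp : Real.exp 1 ≤ 4 := by
        have h := Real.exp_one_lt_d9; linarith
      exact le_trans (le_trans hexp h4le) hy0.1
    · have hy0pos : (0:ℝ) < y e0 := by linarith [hy0.1]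
      have hlogpos : 0 < Real.log (y e0) := Real.log_pos (by linarith [hy0.1])
      have hlogle : Real.log (y e0) ≤ ((n:ℝ) + 1) * Real.log 2 := by
        have h1 : Real.log (y e0) ≤ Real.log ((2:ℝ) ^ (n+1)) :=
          Real.log_le_log hy0pos hy0.2
        rwa [Real.log_pow, Nat.cast_succ] at h1
      have hrpowle : Real.log (y e0) ^ β ≤ L n := by
        rw [hL]
        exact Real.rpow_le_rpow hlogpos.le hlogle hβ0.le
      have hkey : (N:ℝ) * r n ≤ y e0 / Real.log (y e0) ^ β := by
        have hNr : (N:ℝ) * r n = 2 ^ n / L n := by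
          rw [hr]
          field_simp
        rw [hNr]
        exact div_le_div₀ hy0pos.le hy0.1 (Real.rpow_pos_of_pos hlogpos β) hrpowle
      have hcard : (Finset.univ.erase e0).card = N - 1 := by
        rw [Finset.card_erase_of_mem (Finset.mem_univ _), Finset.card_univ, Fintype.card_fin]
      calc ∑ i ∈ Finset.univ.erase e0, (y i) ^ 2
          ≤ ∑ _i ∈ Finset.univ.erase e0, (r n) ^ 2 := by
            refine Finset.sum_le_sum fun i hi => ?_
            have hi' := (Finset.mem_erase.1 hi).1
            have h := hyi i hi'
            exact pow_le_pow_left₀ h.1 h.2 2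
        _ = ((N - 1 : ℕ) : ℝ) * r n ^ 2 := by
            rw [Finset.sum_const, hcard, nsmul_eq_mul]
        _ ≤ (N:ℝ)^2 * r n ^ 2 := by
            have h1 : ((N - 1:ℕ):ℝ) ≤ (N:ℝ) := by exact_mod_cast Nat.sub_le N 1
            have h2 : (N:ℝ) ≤ (N:ℝ)^2 := by nlinarith
            nlinarith [sq_nonneg (r n)]
        _ = ((N:ℝ) * r n) ^ 2 := by ring
        _ ≤ (y e0 / Real.log (y e0) ^ β) ^ 2 := by
            refine pow_le_pow_left₀ ?_ hkey 2
            exact mul_nonneg hNR0.le (hrpos n).le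
  -- the volume of the box
  have hvol : volume (box N (l n) (u n)) =
      ENNReal.ofReal ((2:ℝ) ^ n) * ENNReal.ofReal (r n) ^ (N - 1) := by
    rw [box_vol, ← Finset.mul_prod_erase Finset.univ _ (Finset.mem_univ e0)]
    have h1 : u n e0 - l n e0 = 2 ^ n := by
      rw [hl, hu]
      simp only [↓reduceIte]
      rw [pow_succ]; ring
    have h2 : ∀ i ∈ Finset.univ.erase e0,
        ENNReal.ofReal (u n i - l n i) = ENNReal.ofReal (r n) := by
      intro i hi
      have hi' := (Finset.mem_erase.1 hi).1
      rw [hl, hu]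
      simp [hi']
    rw [Finset.prod_congr rfl h2, Finset.prod_const, h1,
      Finset.card_erase_of_mem (Finset.mem_univ _), Finset.card_univ, Fintype.card_fin]
  -- pointwise lower bound on the box
  have hexp_nonpos : -((N:ℝ) - α) ≤ 0 := by linarith
  have hpoint : ∀ y ∈ box N (l n) (u n),
      ENNReal.ofReal ((C * 2 ^ n) ^ (-((N:ℝ) - α))) ≤
        ENNReal.ofReal (‖x - y‖ ^ (-((N:ℝ) - α))) := by
    intro y hy
    have hy0 : y e0 ∈ Set.Icc ((2:ℝ)^n) ((2:ℝ)^(n+1)) := by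
      have h := hy e0
      rw [hl, hu] at h
      simpa using h
    have hyi : ∀ i, i ≠ e0 → y i ∈ Set.Icc 0 (r n) := by
      intro i hi
      have h := hy i
      rw [hl, hu] at h
      simpa [hi] using h
    have h2n1 : (0:ℝ) < 2 ^ (n+1) := by positivity
    have h2le : (2:ℝ)^n ≤ 2^(n+1) := by rw [pow_succ]; nlinarith
    have habs : ∀ i, |y i| ≤ 2 ^ (n+1) := by
      intro i
      by_cases hi : i = e0
      · subst hi
        rw [abs_le]
        exact ⟨by nlinarith [hy0.1], hy0.2⟩
      · have h := hyi i hi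
        rw [abs_le]
        constructor
        · linarith [h.1]
        · linarith [h.2, hrle]
    have hnorm : ‖y‖ ≤ (N:ℝ) * 2 ^ (n+1) := by
      rw [EuclideanSpace.norm_eq]
      have hsum : ∑ i, ‖y i‖ ^ 2 ≤ (N:ℝ) * ((2:ℝ)^(n+1))^2 := by
        calc ∑ i, ‖y i‖ ^ 2 ≤ ∑ _i : Fin N, ((2:ℝ)^(n+1))^2 := by
              refine Finset.sum_le_sum fun i _ => ?_
              rw [Real.norm_eq_abs]
              exact pow_le_pow_left₀ (abs_nonneg _) (habs i) 2
          _ = (N:ℝ) * ((2:ℝ)^(n+1))^2 := by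
              rw [Finset.sum_const, Finset.card_univ, Fintype.card_fin, nsmul_eq_mul]
      calc √(∑ i, ‖y i‖^2) ≤ √(((N:ℝ) * 2^(n+1))^2) := by
            refine Real.sqrt_le_sqrt ?_
            nlinarith
        _ = (N:ℝ) * 2^(n+1) := Real.sqrt_sq (by positivity)
    have hub : ‖x - y‖ ≤ C * 2 ^ n := by
      have h1 := norm_sub_le x y
      have h2 : (N:ℝ) * 2^(n+1) = 2 * (N:ℝ) * 2^n := by rw [pow_succ]; ring
      rw [hCdef]
      nlinarith [hKn, hnorm, norm_nonneg x]
    have hposn : 0 < ‖x - y‖ := by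
      have hx0 : x e0 ≤ ‖x‖ := (le_abs_self _).trans (coord_abs_le_norm x e0)
      have hlt : x e0 < y e0 := by linarith [hy0.1]
      rw [norm_sub_pos_iff]
      intro h
      exact hlt.ne (congrArg (fun z => z e0) h)
    exact ENNReal.ofReal_le_ofReal
      (Real.rpow_le_rpow_of_nonpos hposn hub hexp_nonpos)
  -- comparing the lower bound with the divergent sequence
  have hQpos : (0:ℝ) < ((N:ℝ) * L n) ^ (N-1) := pow_pos (mul_pos hNR0 (hLpos n)) _
  have hlow : D * (ρ ^ n / ((n:ℝ) + 1) ^ m) ≤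
      (C * 2 ^ n) ^ (-((N:ℝ) - α)) * ((2:ℝ) ^ n * r n ^ (N - 1)) := by
    have h1 : r n ^ (N-1) = ((2:ℝ)^n) ^ (N-1) / ((N:ℝ) * L n) ^ (N-1) := by
      rw [hr, div_pow]
    have h2 : (2:ℝ)^n * ((2:ℝ)^n) ^ (N-1) = ((2:ℝ)^n) ^ N := by
      rw [← pow_succ']
      congr 1
      omega
    have h3 : ((2:ℝ)^n) ^ (-((N:ℝ) - α)) * ((2:ℝ)^n) ^ (N:ℕ) = ρ ^ n := by
      rw [← Real.rpow_natCast ((2:ℝ)^n) N, ← Real.rpow_add hP]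
      have he : -((N:ℝ) - α) + (N:ℝ) = α := by ring
      rw [he]
      calc ((2:ℝ)^n : ℝ) ^ α = ((2:ℝ) ^ ((n:ℕ):ℝ)) ^ α := by rw [Real.rpow_natCast]
        _ = (2:ℝ) ^ (((n:ℕ):ℝ) * α) := by
            rw [← Real.rpow_mul (by norm_num : (0:ℝ) ≤ 2)]
        _ = (2:ℝ) ^ (α * ((n:ℕ):ℝ)) := by rw [mul_comm]
        _ = ((2:ℝ) ^ α) ^ (((n:ℕ)):ℝ) := by
            rw [Real.rpow_mul (by norm_num : (0:ℝ) ≤ 2)]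
        _ = ρ ^ n := by rw [Real.rpow_natCast, hρdef]
    have hEq : (C * 2 ^ n) ^ (-((N:ℝ) - α)) * ((2:ℝ) ^ n * r n ^ (N - 1)) =
        C ^ (-((N:ℝ) - α)) * (ρ ^ n / ((N:ℝ) * L n) ^ (N - 1)) := by
      calc (C * 2 ^ n) ^ (-((N:ℝ) - α)) * ((2:ℝ) ^ n * r n ^ (N - 1))
          = C ^ (-((N:ℝ) - α)) *
            ((((2:ℝ)^n) ^ (-((N:ℝ) - α)) * ((2:ℝ)^n * ((2:ℝ)^n) ^ (N-1))) /
              ((N:ℝ) * L n) ^ (N-1)) := by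
            rw [Real.mul_rpow hCpos.le hP.le, h1]; ring
        _ = C ^ (-((N:ℝ) - α)) *
            ((((2:ℝ)^n) ^ (-((N:ℝ) - α)) * ((2:ℝ)^n) ^ (N:ℕ)) / ((N:ℝ) * L n) ^ (N-1)) := by
            rw [h2]
        _ = C ^ (-((N:ℝ) - α)) * (ρ ^ n / ((N:ℝ) * L n) ^ (N - 1)) := by rw [h3]
    rw [hEq, hD]
    have hQle : ((N:ℝ) * L n) ^ (N-1) ≤ (N:ℝ)^(N-1) * ((n:ℝ)+1) ^ m := by
      have hLle : L n ≤ ((n:ℝ)+1) ^ k := by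
        rw [hL]
        calc (((n:ℝ)+1) * Real.log 2) ^ β ≤ ((n:ℝ)+1) ^ β := by
              refine Real.rpow_le_rpow (by positivity) ?_ hβ0.le
              nlinarith [Nat.cast_nonneg (α := ℝ) n]
          _ ≤ ((n:ℝ)+1) ^ ((k:ℕ):ℝ) := by
              refine Real.rpow_le_rpow_of_exponent_le ?_ ?_
              · have := Nat.cast_nonneg (α := ℝ) n; linarith
              · exact_mod_cast Nat.le_ceil β
          _ = ((n:ℝ)+1) ^ k := Real.rpow_natCast _ k
      calc ((N:ℝ) * L n) ^ (N-1) ≤ ((N:ℝ) * ((n:ℝ)+1)^k) ^ (N-1) := by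
            refine pow_le_pow_left₀ (mul_pos hNR0 (hLpos n)).le ?_ _
            exact mul_le_mul_of_nonneg_left hLle hNR0.le
        _ = (N:ℝ)^(N-1) * ((n:ℝ)+1) ^ m := by
            rw [mul_pow, ← pow_mul, hm]
    have hCe : (0:ℝ) < C ^ (-((N:ℝ) - α)) := Real.rpow_pos_of_pos hCpos _
    have h5 : C ^ (-((N:ℝ)-α)) / (N:ℝ)^(N-1) * (ρ^n / ((n:ℝ)+1)^m) =
        (C ^ (-((N:ℝ)-α)) * ρ^n) / ((N:ℝ)^(N-1) * ((n:ℝ)+1)^m) := by ring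
    have h6 : C ^ (-((N:ℝ)-α)) * (ρ^n / ((N:ℝ)*L n)^(N-1)) =
        (C ^ (-((N:ℝ)-α)) * ρ^n) / (((N:ℝ)*L n)^(N-1)) := by ring
    rw [h5, h6]
    exact div_le_div_of_nonneg_left (by positivity) hQpos hQle
  -- assembling everything
  calc (M : ENNReal) = ENNReal.ofReal (M:ℝ) := (ENNReal.ofReal_coe_nnreal).symm
    _ ≤ ENNReal.ofReal ((C * 2 ^ n) ^ (-((N:ℝ) - α)) * ((2:ℝ) ^ n * r n ^ (N - 1))) :=
        ENNReal.ofReal_le_ofReal (le_trans hM hlow)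
    _ = ENNReal.ofReal ((C * 2 ^ n) ^ (-((N:ℝ) - α))) * volume (box N (l n) (u n)) := by
        rw [ENNReal.ofReal_mul (Real.rpow_nonneg (mul_pos hCpos hP).le _),
          ENNReal.ofReal_mul hP.le, ENNReal.ofReal_pow (hrpos n).le, hvol]
    _ = ∫⁻ _ in box N (l n) (u n), ENNReal.ofReal ((C * 2 ^ n) ^ (-((N:ℝ) - α))) := by
        rw [setLIntegral_const]
    _ ≤ ∫⁻ y in box N (l n) (u n), ENNReal.ofReal (‖x - y‖ ^ (-((N:ℝ) - α))) :=
        setLIntegral_mono' (box_meas N (l n) (u n)) hpoint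
    _ ≤ ∫⁻ y in {y : EuclideanSpace ℝ (Fin N) |
          Real.exp 1 ≤ y e0 ∧
          ∑ i ∈ Finset.univ.erase e0, (y i) ^ 2 ≤
            (y e0 / (Real.log (y e0)) ^ β) ^ 2},
          ENNReal.ofReal (‖x - y‖ ^ (-((N:ℝ) - α))) :=
        lintegral_mono' (Measure.restrict_mono hsub le_rfl) le_rfl
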